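/- Let m1, m2 be positive integers with gcd(m1,m2)=1 and m2 even, and let α ∈ ℝ. For t ∈ [0,2π), define A(t) = {s ∈ [0,2π) : ℓ(s) = ℓ(t)}. Then #A(t) = m2 if t = lπ/(m1 m2) with 0 ≤ l < 2 m1 m2 and l ≡ 0 (mod m1); #A(t) = 2 if t = lπ/(m1 m2) with 0 ≤ l < 2 m1 m2 and l ≢ 0 (mod m1); and #A(t) = 1 for all other t ∈ [0,2π). -/

import Mathlib

set_option maxHeartbeats 1000000
open Real

noncomputable def lissajous (m1 m2 : ℕ) (α : ℝ) (t : ℝ) : ℝ × ℝ × ℝ :=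
  (Real.sin (m2 * t) * Real.cos (m1 * t - α * π),
   Real.sin (m2 * t) * Real.sin (m1 * t - α * π),
   Real.cos (m2 * t))

lemma cos_eq_neg_one_iff' (x : ℝ) : Real.cos x = -1 ↔ ∃ n : ℤ, (2*n+1) * π = x := by
  constructor
  · intro h
    have h2 : Real.cos (x - π) = 1 := by rw [Real.cos_sub_pi, h, neg_neg]
    obtain ⟨n, hn⟩ := (Real.cos_eq_one_iff _).1 h2
    exact ⟨n, by linarith⟩
  · rintro ⟨n, rfl⟩
    have : ((2*(n:ℝ)+1)) * π = n * (2*π) + π := by ring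
    rw [this, Real.cos_int_mul_two_pi_add_pi]

lemma mem_iff (m1 m2 : ℕ) (hm1 : 0 < m1) (hm2 : 0 < m2) (hgcd : Nat.gcd m1 m2 = 1)
    (α t s : ℝ) (h : Real.sin (m2 * t) ≠ 0) :
    lissajous m1 m2 α s = lissajous m1 m2 α t ↔
      ((∃ a : ℤ, s = t + 2*π*a) ∨
       (∃ a b : ℤ, (m2:ℝ)*(s+t) = 2*π*a ∧ (m1:ℝ)*(s-t) = (2*b+1)*π)) := by
  have hpi := Real.pi_pos
  constructor
  · intro hl
    simp only [lissajous, Prod.ext_iff] at hl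
    obtain ⟨h1, h2, h3⟩ := hl
    have hpyt := Real.sin_sq_add_cos_sq ((m2:ℝ) * t)
    have hpyt2 := Real.sin_sq_add_cos_sq ((m1:ℝ) * t - α * π)
    have hfac : (Real.sin (m2*s) - Real.sin (m2*t)) * (Real.sin (m2*s) + Real.sin (m2*t)) = 0 := by
      have hps := Real.sin_sq_add_cos_sq ((m2:ℝ) * s)
      have h4 : Real.sin ((m2:ℝ)*s)^2 = Real.sin ((m2:ℝ)*t)^2 := by
        rw [Real.sin_sq, Real.sin_sq, h3]
      nlinarith [h4]
    rcases mul_eq_zero.1 hfac with hss | hss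
    · -- sin equal
      left
      have hss' : Real.sin ((m2:ℝ)*s) = Real.sin ((m2:ℝ)*t) := by linarith
      rw [hss'] at h1 h2
      have hc : Real.cos ((m1:ℝ)*s - α*π) = Real.cos ((m1:ℝ)*t - α*π) := mul_left_cancel₀ h h1
      have hs' : Real.sin ((m1:ℝ)*s - α*π) = Real.sin ((m1:ℝ)*t - α*π) := mul_left_cancel₀ h h2
      have hcos1 : Real.cos ((m2:ℝ)*s - (m2:ℝ)*t) = 1 := by
        rw [Real.cos_sub, hss', h3]; nlinarith
      have hcos2 : Real.cos (((m1:ℝ)*s - α*π) - ((m1:ℝ)*t - α*π)) = 1 := by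
        rw [Real.cos_sub, hc, hs']; nlinarith
      obtain ⟨a, ha⟩ := (Real.cos_eq_one_iff _).1 hcos1
      obtain ⟨b, hb⟩ := (Real.cos_eq_one_iff _).1 hcos2
      have hb' : (m1:ℝ)*(s-t) = b * (2*π) := by rw [mul_sub]; linarith [hb]
      have ha' : (m2:ℝ)*(s-t) = a * (2*π) := by rw [mul_sub]; linarith [ha]
      -- m1 * a = m2 * b
      have hr : ((m1 * a : ℤ) : ℝ) * (2*π) = ((m2 * b : ℤ) : ℝ) * (2*π) := by
        push_cast
        linear_combination (m2:ℝ) * hb' - (m1:ℝ) * ha'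
      have hz : (m1 * a : ℤ) = (m2 * b : ℤ) := by
        have := mul_right_cancel₀ (by positivity : (2*π : ℝ) ≠ 0) hr
        exact_mod_cast this
      have hcop : IsCoprime ((m2:ℤ)) ((m1:ℤ)) := by
        rw [Int.isCoprime_iff_gcd_eq_one, Int.gcd_natCast_natCast, Nat.gcd_comm]
        exact hgcd
      have hdvd : (m2:ℤ) ∣ (m1 : ℤ) * a := ⟨b, hz⟩
      obtain ⟨c, hc'⟩ := hcop.dvd_of_dvd_mul_left hdvd
      refine ⟨c, ?_⟩
      have : (m2:ℝ)*(s-t) = (m2:ℝ) * (2*π*c) := by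
        rw [ha', hc']; push_cast; ring
      have hm2r : (m2:ℝ) ≠ 0 := by positivity
      have := mul_left_cancel₀ hm2r this
      linarith
    · -- sin opposite
      right
      have hss' : Real.sin ((m2:ℝ)*s) = -Real.sin ((m2:ℝ)*t) := by linarith
      rw [hss'] at h1 h2
      have hc : Real.cos ((m1:ℝ)*s - α*π) = -Real.cos ((m1:ℝ)*t - α*π) := by
        have : Real.sin ((m2:ℝ)*t) * (-Real.cos ((m1:ℝ)*s - α*π)) = Real.sin ((m2:ℝ)*t) * Real.cos ((m1:ℝ)*t - α*π) := by linarith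
        have := mul_left_cancel₀ h this
        linarith
      have hs' : Real.sin ((m1:ℝ)*s - α*π) = -Real.sin ((m1:ℝ)*t - α*π) := by
        have : Real.sin ((m2:ℝ)*t) * (-Real.sin ((m1:ℝ)*s - α*π)) = Real.sin ((m2:ℝ)*t) * Real.sin ((m1:ℝ)*t - α*π) := by linarith
        have := mul_left_cancel₀ h this
        linarith
      have hcos1 : Real.cos ((m2:ℝ)*s + (m2:ℝ)*t) = 1 := by
        rw [Real.cos_add, hss', h3]; nlinarith
      have hcos2 : Real.cos (((m1:ℝ)*s - α*π) - ((m1:ℝ)*t - α*π)) = -1 := by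
        rw [Real.cos_sub, hc, hs']; nlinarith
      obtain ⟨a, ha⟩ := (Real.cos_eq_one_iff _).1 hcos1
      obtain ⟨b, hb⟩ := (cos_eq_neg_one_iff' _).1 hcos2
      exact ⟨a, b, by rw [mul_add]; linarith, by rw [mul_sub]; linarith⟩
  · rintro (⟨a, rfl⟩ | ⟨a, b, ha, hb⟩)
    · simp only [lissajous, Prod.ext_iff]
      have e2 : (m2:ℝ) * (t + 2*π*a) = (m2:ℝ)*t + (m2*a : ℤ) * (2*π) := by push_cast; ring
      have e1 : (m1:ℝ) * (t + 2*π*a) - α*π = ((m1:ℝ)*t - α*π) + (m1*a : ℤ) * (2*π) := by push_cast; ring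
      rw [e2, e1, Real.sin_add_int_mul_two_pi, Real.cos_add_int_mul_two_pi,
        Real.sin_add_int_mul_two_pi, Real.cos_add_int_mul_two_pi]
      exact ⟨rfl, rfl, rfl⟩
    · simp only [lissajous, Prod.ext_iff]
      have e2 : (m2:ℝ) * s = (a:ℤ) * (2*π) - (m2:ℝ)*t := by push_cast; rw [mul_add] at ha; linarith
      have e1 : (m1:ℝ) * s - α*π = (((m1:ℝ)*t - α*π) + π) + (b:ℤ) * (2*π) := by
        rw [mul_sub] at hb; push_cast; linarith
      rw [e2, e1, Real.sin_int_mul_two_pi_sub, Real.cos_int_mul_two_pi_sub,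
        Real.sin_add_int_mul_two_pi, Real.cos_add_int_mul_two_pi,
        Real.sin_add_pi, Real.cos_add_pi]
      refine ⟨by ring, by ring, rfl⟩

lemma mem_iff_zero (m1 m2 : ℕ) (α t s : ℝ) (h : Real.sin ((m2:ℝ)*t) = 0) :
    lissajous m1 m2 α s = lissajous m1 m2 α t ↔
      ∃ a : ℤ, (m2:ℝ)*s = (m2:ℝ)*t + a*(2*π) := by
  constructor
  · intro hl
    simp only [lissajous, Prod.ext_iff] at hl
    obtain ⟨h1, h2, h3⟩ := hl
    rw [h, zero_mul] at h1 h2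
    have hs0 : Real.sin ((m2:ℝ)*s) = 0 := by
      by_contra hs
      have hc := (mul_eq_zero.1 h1).resolve_left hs
      have hsn := (mul_eq_zero.1 h2).resolve_left hs
      nlinarith [Real.sin_sq_add_cos_sq ((m1:ℝ)*s - α*π)]
    have hone : Real.cos ((m2:ℝ)*s - (m2:ℝ)*t) = 1 := by
      rw [Real.cos_sub, h3, hs0, h]
      nlinarith [Real.sin_sq_add_cos_sq ((m2:ℝ)*t)]
    obtain ⟨a, ha⟩ := (Real.cos_eq_one_iff _).1 hone
    exact ⟨a, by linarith⟩
  · rintro ⟨a, ha⟩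
    simp only [lissajous, Prod.ext_iff]
    have e : (m2:ℝ)*s = (m2:ℝ)*t + a*(2*π) := ha
    rw [e, Real.sin_add_int_mul_two_pi, Real.cos_add_int_mul_two_pi, h]
    simp

lemma lcm_dvd' (m1 m2 : ℕ) (hgcd : Nat.gcd m1 m2 = 1) {d : ℤ}
    (h1 : (2*(m1:ℤ)) ∣ d) (h2 : (2*(m2:ℤ)) ∣ d) : (2*(m1:ℤ)*m2) ∣ d := by
  obtain ⟨p, hp⟩ := h1
  obtain ⟨q, hq⟩ := h2
  have hcop : IsCoprime ((m2:ℤ)) ((m1:ℤ)) := by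
    rw [Int.isCoprime_iff_gcd_eq_one, Int.gcd_natCast_natCast, Nat.gcd_comm]
    exact hgcd
  have hz : (m1:ℤ) * p = (m2:ℤ) * q := by linarith
  obtain ⟨r, hr⟩ := hcop.dvd_of_dvd_mul_left ⟨q, hz⟩
  exact ⟨r, by rw [hp, hr]; ring⟩

lemma crt' (m1 m2 : ℕ) (hm1 : 0 < m1) (hm2 : 0 < m2) (hgcd : Nat.gcd m1 m2 = 1)
    (heven : Even m2) (l : ℤ) :
    ∃ k : ℤ, 0 ≤ k ∧ k < 2*m1*m2 ∧ (2*(m1:ℤ)) ∣ k + l ∧ (2*(m2:ℤ)) ∣ k - l - m2 := by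
  obtain ⟨h, hh⟩ := heven
  have hhz : (m2:ℤ) = 2*h := by exact_mod_cast by omega
  have hbez := Nat.gcd_eq_gcd_ab m1 m2
  rw [hgcd] at hbez
  set u := Nat.gcdA m1 m2
  set v := Nat.gcdB m1 m2
  have huv : (m1:ℤ)*u + (m2:ℤ)*v = 1 := by push_cast at hbez ⊢; linarith
  set x : ℤ := u * (l + h) with hx
  set k0 : ℤ := -l + 2*m1*x with hk0
  have hM : (0:ℤ) < 2*m1*m2 := by positivity
  have hdd : (2*(m1:ℤ)*m2) ∣ (k0 % (2*m1*m2) - k0) :=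
    ⟨-(k0 / (2*m1*m2)), by rw [Int.emod_def]; push_cast; ring⟩
  have hd1 : (2*(m1:ℤ)) ∣ (k0 % (2*m1*m2) - k0) := dvd_trans ⟨m2, by ring⟩ hdd
  have hd2 : (2*(m2:ℤ)) ∣ (k0 % (2*m1*m2) - k0) := dvd_trans ⟨m1, by ring⟩ hdd
  refine ⟨k0 % (2*m1*m2), Int.emod_nonneg _ (by positivity), Int.emod_lt_of_pos _ hM, ?_, ?_⟩
  · have h1 : (2*(m1:ℤ)) ∣ k0 + l := ⟨x, by rw [hk0]; ring⟩
    have : k0 % (2*m1*m2) + l = (k0 % (2*m1*m2) - k0) + (k0 + l) := by ring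
    rw [this]; exact dvd_add hd1 h1
  · have hmx : (m1:ℤ)*x - (l + h) = -(m2*(v*(l+h))) := by
      rw [hx]; linear_combination (l + (h:ℤ)) * huv
    have h2 : (2*(m2:ℤ)) ∣ k0 - l - m2 := by
      refine ⟨-(v*(l+h)), ?_⟩
      have : k0 - l - m2 = 2*((m1:ℤ)*x - (l+h)) := by rw [hk0, hhz]; ring
      rw [this, hmx]; ring
    have : k0 % (2*m1*m2) - l - m2 = (k0 % (2*m1*m2) - k0) + (k0 - l - m2) := by ring
    rw [this]; exact dvd_add hd2 h2


theorem stmt1 (m1 m2 : ℕ) (hm1 : 0 < m1) (hm2 : 0 < m2)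
    (hgcd : Nat.gcd m1 m2 = 1) (heven : Even m2) (α t : ℝ)
    (ht : t ∈ Set.Ico (0:ℝ) (2 * π)) :
    ((∃ l : ℕ, l < 2 * m1 * m2 ∧ m1 ∣ l ∧ t = l * π / (m1 * m2)) →
      Set.ncard {s ∈ Set.Ico (0:ℝ) (2 * π) |
        lissajous m1 m2 α s = lissajous m1 m2 α t} = m2) ∧
    ((∃ l : ℕ, l < 2 * m1 * m2 ∧ ¬ (m1 ∣ l) ∧ t = l * π / (m1 * m2)) →
      Set.ncard {s ∈ Set.Ico (0:ℝ) (2 * π) |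
        lissajous m1 m2 α s = lissajous m1 m2 α t} = 2) ∧
    ((¬ ∃ l : ℕ, l < 2 * m1 * m2 ∧ t = l * π / (m1 * m2)) →
      Set.ncard {s ∈ Set.Ico (0:ℝ) (2 * π) |
        lissajous m1 m2 α s = lissajous m1 m2 α t} = 1) := by
  have hpi := Real.pi_pos
  have hm1R : (0:ℝ) < m1 := by exact_mod_cast hm1
  have hm2R : (0:ℝ) < m2 := by exact_mod_cast hm2
  obtain ⟨ht0, ht2⟩ := ht
  refine ⟨?_, ?_, ?_⟩
  · -- case 1
    rintro ⟨l, hl, ⟨k, rfl⟩, htl⟩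
    have hk2 : k < 2 * m2 := by
      have h2 : m1 * k < m1 * (2 * m2) := by
        calc m1 * k < 2*m1*m2 := hl
          _ = m1 * (2*m2) := by ring
      exact Nat.lt_of_mul_lt_mul_left h2
    have he : (m2:ℝ)*t = (k:ℝ)*π := by
      rw [htl]; push_cast; field_simp
    have hs0 : Real.sin ((m2:ℝ)*t) = 0 := by
      rw [he]; exact Real.sin_nat_mul_pi k
    set f : ℕ → ℝ := fun i => ((2*i + k % 2 : ℕ) : ℝ)*π/m2 with hf
    have hset : {s ∈ Set.Ico (0:ℝ) (2 * π) |
        lissajous m1 m2 α s = lissajous m1 m2 α t} = ↑((Finset.range m2).image f) := by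
      ext s
      simp only [Set.mem_setOf_eq, Finset.coe_image, Set.mem_image, Finset.mem_coe,
        Finset.mem_range]
      constructor
      · rintro ⟨⟨hs0', hs2⟩, hls⟩
        obtain ⟨a, ha⟩ := (mem_iff_zero m1 m2 α t s hs0).1 hls
        have hje : (m2:ℝ)*s = (((k:ℤ) + 2*a : ℤ):ℝ)*π := by
          push_cast; rw [ha, he]; ring
        have hj0 : 0 ≤ (k:ℤ) + 2*a := by
          have : (0:ℝ) ≤ (((k:ℤ) + 2*a : ℤ):ℝ) := by
            nlinarith [hje, mul_nonneg hm2R.le hs0']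
          exact_mod_cast this
        have hj2 : (k:ℤ) + 2*a < 2*m2 := by
          have : (((k:ℤ) + 2*a : ℤ):ℝ) < 2*(m2:ℝ) := by
            nlinarith [hje, mul_pos hm2R (by linarith : (0:ℝ) < 2*π - s)]
          exact_mod_cast this
        set j : ℕ := ((k:ℤ) + 2*a).toNat with hjdef
        have hjz : (j:ℤ) = (k:ℤ) + 2*a := Int.toNat_of_nonneg hj0
        refine ⟨(j - k % 2)/2, by omega, ?_⟩
        have h2j : 2*((j - k % 2)/2) + k % 2 = j := by omega
        rw [hf]
        simp only
        rw [h2j]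
        rw [eq_comm, eq_div_iff (ne_of_gt hm2R)]
        have hjR : ((j:ℕ):ℝ) = (((k:ℤ) + 2*a : ℤ):ℝ) := by exact_mod_cast hjz
        rw [hjR]
        linarith [hje]
      · rintro ⟨i, hi, rfl⟩
        have hb : (2*i + k % 2 : ℕ) < 2*m2 := by omega
        refine ⟨⟨by positivity, ?_⟩, ?_⟩
        · rw [hf]
          simp only
          rw [div_lt_iff₀ hm2R]
          have : ((2*i + k % 2 : ℕ):ℝ) < 2*(m2:ℝ) := by exact_mod_cast hb
          nlinarith
        · apply (mem_iff_zero m1 m2 α t _ hs0).2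
          refine ⟨(i:ℤ) - (k:ℤ)/2, ?_⟩
          have hz : ((2*i + k % 2 : ℕ):ℤ) = (k:ℤ) + 2*((i:ℤ) - (k:ℤ)/2) := by omega
          have hzR : ((2*i + k % 2 : ℕ):ℝ) = (k:ℝ) + 2*(((i:ℤ) - (k:ℤ)/2 : ℤ):ℝ) := by
            have hzc := congrArg (fun z : ℤ => (z:ℝ)) hz
            push_cast at hzc ⊢
            have hb2 : ((k % 2 : ℕ):ℝ) = (((k:ℤ) % 2 : ℤ):ℝ) := by norm_cast
            push_cast at hb2
            linarith [hzc, hb2]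
          rw [hf]
          simp only
          rw [he, mul_div_assoc', mul_comm ((m2:ℝ)) _, ← mul_div_assoc',
            div_self (ne_of_gt hm2R), mul_one, hzR]
          ring
    rw [hset, Set.ncard_coe_finset]
    rw [Finset.card_image_of_injOn, Finset.card_range]
    intro i _ i' _ hii
    rw [hf] at hii
    simp only at hii
    rw [div_eq_div_iff (ne_of_gt hm2R) (ne_of_gt hm2R)] at hii
    have := mul_right_cancel₀ (by positivity : (π * (m2:ℝ)) ≠ 0) (by
      linarith [hii] : ((2*i + k % 2 : ℕ):ℝ) * (π * m2) = ((2*i' + k % 2 : ℕ):ℝ) * (π * m2))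
    have hnn : (2*i + k % 2 : ℕ) = (2*i' + k % 2 : ℕ) := by exact_mod_cast this
    omega
  · -- case 2
    rintro ⟨l, hl, hndvd, htl⟩
    have hlR : (m1:ℝ)*m2*t = l*π := by rw [htl]; push_cast; field_simp
    have hsin : Real.sin ((m2:ℝ)*t) ≠ 0 := by
      intro h0
      obtain ⟨n, hn⟩ := Real.sin_eq_zero_iff.1 h0
      have hcc : (((m1:ℤ)*n : ℤ):ℝ) * π = ((l:ℤ):ℝ)*π := by
        push_cast; linear_combination (m1:ℝ)*hn + hlR
      have hz : (m1:ℤ)*n = (l:ℤ) := by exact_mod_cast mul_right_cancel₀ Real.pi_ne_zero hcc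
      apply hndvd
      have hdl : (m1:ℤ) ∣ (l:ℤ) := ⟨n, hz.symm⟩
      exact_mod_cast hdl
    obtain ⟨k, hk0, hkM, hd1, hd2⟩ := crt' m1 m2 hm1 hm2 hgcd heven l
    set s1 : ℝ := (k:ℝ)*π/((m1:ℝ)*m2) with hs1
    have hs1t : (m1:ℝ)*m2*s1 = k*π := by rw [hs1]; field_simp
    have hkl : k ≠ l := by
      rintro rfl
      obtain ⟨p, hp⟩ := hd1
      apply hndvd
      have hdl : (m1:ℤ) ∣ (l:ℤ) := ⟨p, by linarith⟩
      exact_mod_cast hdl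
    have htns1 : t ≠ s1 := by
      intro he
      apply hkl
      have hcc : (k:ℝ)*π = (l:ℝ)*π := by rw [← hs1t, ← he, hlR]
      have := mul_right_cancel₀ Real.pi_ne_zero hcc
      exact_mod_cast this
    have hkR0 : (0:ℝ) ≤ (k:ℝ) := by exact_mod_cast hk0
    have hkRM : (k:ℝ) < 2*(m1:ℝ)*m2 := by exact_mod_cast hkM
    have hs10 : 0 ≤ s1 := by rw [hs1]; positivity
    have hs12 : s1 < 2*π := by
      rw [hs1, div_lt_iff₀ (by positivity)]
      nlinarith
    have hset : {s ∈ Set.Ico (0:ℝ) (2 * π) |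
        lissajous m1 m2 α s = lissajous m1 m2 α t} = {t, s1} := by
      ext s
      simp only [Set.mem_setOf_eq, Set.mem_insert_iff, Set.mem_singleton_iff]
      constructor
      · rintro ⟨⟨hs0, hs2⟩, hls⟩
        rcases (mem_iff m1 m2 hm1 hm2 hgcd α t s hsin).1 hls with ⟨a, rfl⟩ | ⟨a, b, ha, hb⟩
        · left
          have ha1 : (-1:ℝ) < a := by nlinarith
          have ha2 : (a:ℝ) < 1 := by nlinarith
          have haz : a = 0 := by
            have h1 : (-1:ℤ) < a := by exact_mod_cast ha1
            have h2 : a < 1 := by exact_mod_cast ha2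
            omega
          rw [haz]; push_cast; ring
        · right
          set k' : ℤ := 2*a*m1 - l with hk'
          have hs' : (m1:ℝ)*m2*s = (k':ℝ)*π := by
            push_cast [hk']
            linear_combination (m1:ℝ)*ha - hlR
          have hcc : ((k' - l:ℤ):ℝ)*π = (((2*b+1)*(m2:ℤ) : ℤ):ℝ)*π := by
            push_cast
            linear_combination (m2:ℝ)*hb - hs' + hlR
          have hbz : k' - l = (2*b+1)*(m2:ℤ) := by
            exact_mod_cast mul_right_cancel₀ Real.pi_ne_zero hcc
          have hk'1 : (2*(m1:ℤ)) ∣ k' + l := ⟨a, by rw [hk']; ring⟩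
          have hk'2 : (2*(m2:ℤ)) ∣ k' - l - m2 := ⟨b, by linear_combination hbz⟩
          have hk'0 : (0:ℤ) ≤ k' := by
            have : (0:ℝ) ≤ (k':ℝ) := by
              nlinarith [hs', mul_nonneg (mul_nonneg hm1R.le hm2R.le) hs0]
            exact_mod_cast this
          have hk'M : k' < 2*(m1:ℤ)*m2 := by
            have : (k':ℝ) < 2*(m1:ℝ)*m2 := by
              nlinarith [hs', mul_pos (mul_pos hm1R hm2R) (by linarith : (0:ℝ) < 2*π - s)]
            exact_mod_cast this
          have hdvd : (2*(m1:ℤ)*m2) ∣ (k - k') := by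
            apply lcm_dvd' m1 m2 hgcd
            · have := dvd_sub hd1 hk'1
              simpa using this
            · have := dvd_sub hd2 hk'2
              simpa using this
          have hkk' : k = k' := by
            have habs : |k - k'| < 2*(m1:ℤ)*m2 := by
              rw [abs_lt]
              constructor <;> linarith
            have := Int.eq_zero_of_abs_lt_dvd hdvd habs
            linarith
          rw [hs1, eq_div_iff (by positivity : ((m1:ℝ)*m2) ≠ 0)]
          rw [hkk']
          linear_combination hs'
      · rintro (rfl | rfl)
        · exact ⟨⟨ht0, ht2⟩, rfl⟩
        · refine ⟨⟨hs10, hs12⟩, (mem_iff m1 m2 hm1 hm2 hgcd α t s1 hsin).2 (Or.inr ?_)⟩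
          obtain ⟨p, hp⟩ := hd1
          obtain ⟨q, hq⟩ := hd2
          have hpR : (k:ℝ) + l = 2*m1*p := by exact_mod_cast hp
          have hqR : (k:ℝ) - l - m2 = 2*m2*q := by exact_mod_cast hq
          refine ⟨p, q, ?_, ?_⟩
          · have hE : (m1:ℝ)*((m2:ℝ)*(s1+t)) = (m1:ℝ)*(2*π*p) := by
              linear_combination hs1t + hlR + π*hpR
            exact mul_left_cancel₀ (ne_of_gt hm1R) hE
          · have hE : (m2:ℝ)*((m1:ℝ)*(s1-t)) = (m2:ℝ)*((2*q+1)*π) := by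
              linear_combination hs1t - hlR + π*hqR
            exact mul_left_cancel₀ (ne_of_gt hm2R) hE
    rw [hset]
    exact Set.ncard_pair htns1
  · -- case 3
    rintro hne
    have hsin : Real.sin ((m2:ℝ)*t) ≠ 0 := by
      intro h0
      obtain ⟨n, hn⟩ := Real.sin_eq_zero_iff.1 h0
      have hn0 : 0 ≤ n := by
        have : (0:ℝ) ≤ (n:ℝ) := by nlinarith
        exact_mod_cast this
      have hn2 : n < 2*m2 := by
        have : (n:ℝ) < 2*m2 := by nlinarith
        exact_mod_cast this
      apply hne
      refine ⟨n.toNat * m1, ?_, ?_⟩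
      · have : n.toNat < 2*m2 := by omega
        calc n.toNat * m1 < (2*m2) * m1 := by
              exact (Nat.mul_lt_mul_right hm1).2 this
          _ = 2*m1*m2 := by ring
      · have hnn : ((n.toNat : ℕ) : ℝ) = (n:ℝ) := by
          exact_mod_cast congrArg (fun z : ℤ => (z:ℝ)) (Int.toNat_of_nonneg hn0)
        push_cast
        rw [hnn]
        field_simp
        linear_combination -hn
    have hset : {s ∈ Set.Ico (0:ℝ) (2 * π) |
        lissajous m1 m2 α s = lissajous m1 m2 α t} = {t} := by
      ext s
      simp only [Set.mem_setOf_eq, Set.mem_singleton_iff]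
      constructor
      · rintro ⟨⟨hs0, hs2⟩, hls⟩
        rcases (mem_iff m1 m2 hm1 hm2 hgcd α t s hsin).1 hls with ⟨a, rfl⟩ | ⟨a, b, ha, hb⟩
        · have ha1 : (-1:ℝ) < a := by nlinarith
          have ha2 : (a:ℝ) < 1 := by nlinarith
          have : a = 0 := by
            have h1 : (-1:ℤ) < a := by exact_mod_cast ha1
            have h2 : a < 1 := by exact_mod_cast ha2
            omega
          rw [this]; push_cast; ring
        · exfalso
          apply hne
          -- 2 m1 m2 t = (2 a m1 - (2b+1) m2) π
          obtain ⟨h2, hh2⟩ := heven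
          have hm2e : (m2:ℝ) = 2*(h2:ℝ) := by exact_mod_cast (by omega : m2 = 2*h2)
          set d : ℤ := a*m1 - (2*b+1)*h2 with hd
          have htd : ((m1:ℝ)*m2) * t = (d:ℝ) * π := by
            push_cast [hd]
            linear_combination ((m1:ℝ)/2)*ha - ((m2:ℝ)/2)*hb - ((2*(b:ℝ)+1)*π/2)*hm2e
          have hd0 : 0 ≤ d := by
            have : (0:ℝ) ≤ (d:ℝ) := by
              nlinarith [htd, mul_nonneg (mul_nonneg hm1R.le hm2R.le) ht0]
            exact_mod_cast this
          have hd2 : d < 2*m1*m2 := by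
            have : (d:ℝ) < 2*(m1:ℝ)*m2 := by
              nlinarith [htd, mul_pos (mul_pos hm1R hm2R) (by linarith : (0:ℝ) < 2*π - t)]
            exact_mod_cast this
          refine ⟨d.toNat, ?_, ?_⟩
          · zify
            rw [Int.toNat_of_nonneg hd0]
            exact_mod_cast hd2
          have hdd : ((d.toNat : ℕ) : ℝ) = (d:ℝ) := by
            exact_mod_cast congrArg (fun z : ℤ => (z:ℝ)) (Int.toNat_of_nonneg hd0)
          push_cast
          rw [hdd]
          field_simp
          linear_combination htd
      · rintro rfl
        exact ⟨⟨ht0, ht2⟩, rfl⟩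
    rw [hset, Set.ncard_singleton]
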